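/- (General WSBD framework, convergence to stationarity.) Let C : ℝ^d → ℝ be L-smooth and bounded below by C*. Let (F_t)_{t≥0} be a filtration, (θ^t)_{t≥0} random vectors with θ^t F_t-measurable, (u_t)_{t≥0} random vectors in ℝ^d, and (δ^t)_{t≥0} random freezing masks, with C(θ^t), ‖∇C(θ^t)‖², and ‖u_t‖² integrable for every t. Suppose there are constants c > 0 and K ≥ 0 such that, almost surely for every t, E[⟨∇C(θ^t), δ^t ⊙ u_t⟩ | F_t] ≥ c ‖∇C(θ^t)‖² and E[‖u_t‖² | F_t] ≤ K, suppose θ^{t+1} = θ^t − η_t (δ^t ⊙ u_t) almost surely, and suppose the step sizes η_t > 0 satisfy Σ_t η_t = ∞ and Σ_t η_t² < ∞. Then liminf_{t→∞} E[‖∇C(θ^t)‖²] = 0. -/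

import Mathlib

open MeasureTheory Filter
open scoped RealInnerProductSpace



lemma descent_lemma {E : Type*} [NormedAddCommGroup E] [InnerProductSpace ℝ E] [CompleteSpace E]
    (f : E → ℝ) (L : ℝ) (hdiff : Differentiable ℝ f)
    (hlip : ∀ x y, ‖gradient f x - gradient f y‖ ≤ L * ‖x - y‖)
    (x y : E) :
    f y ≤ f x + ⟪gradient f x, y - x⟫ + L / 2 * ‖y - x‖ ^ 2 := by
  set v := y - x with hv
  have hc : ∀ s : ℝ, HasDerivAt (fun s : ℝ => x + s • v) v s := by
    intro s
    simpa using ((hasDerivAt_id s).smul_const v).const_add x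
  have hg : ∀ s : ℝ, HasDerivAt (fun s : ℝ => f (x + s • v))
      ⟪gradient f (x + s • v), v⟫ s := by
    intro s
    have h1 := ((hdiff (x + s • v)).hasGradientAt.hasFDerivAt).comp_hasDerivAt s (hc s)
    rw [InnerProductSpace.toDual_apply_apply] at h1
    exact h1
  have hgradlip : LipschitzWith (Real.toNNReal L) (gradient f) := by
    apply LipschitzWith.of_dist_le_mul
    intro a b
    rw [dist_eq_norm, dist_eq_norm]
    refine (hlip a b).trans ?_
    exact mul_le_mul_of_nonneg_right (Real.le_coe_toNNReal L) (norm_nonneg _)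
  have hcont : Continuous fun s : ℝ => ⟪gradient f (x + s • v), v⟫ := by
    apply Continuous.inner
    · exact hgradlip.continuous.comp (by continuity)
    · exact continuous_const
  have hkey : ∫ s in (0:ℝ)..1, ⟪gradient f (x + s • v), v⟫ = f y - f x := by
    have := intervalIntegral.integral_eq_sub_of_hasDerivAt
      (f := fun s : ℝ => f (x + s • v)) (fun s _ => hg s) (hcont.intervalIntegrable 0 1)
    simpa [hv] using this
  have hb : ∀ s ∈ Set.Icc (0:ℝ) 1,
      ⟪gradient f (x + s • v), v⟫ ≤ ⟪gradient f x, v⟫ + L * ‖v‖ ^ 2 * s := by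
    intro s hs
    have h1 : ⟪gradient f (x + s • v) - gradient f x, v⟫ ≤
        ‖gradient f (x + s • v) - gradient f x‖ * ‖v‖ := real_inner_le_norm _ _
    have h2 : ‖gradient f (x + s • v) - gradient f x‖ ≤ L * (s * ‖v‖) := by
      have := hlip (x + s • v) x
      simpa [norm_smul, abs_of_nonneg hs.1] using this
    have h3 : ⟪gradient f (x + s • v) - gradient f x, v⟫ =
        ⟪gradient f (x + s • v), v⟫ - ⟪gradient f x, v⟫ := inner_sub_left _ _ _
    nlinarith [norm_nonneg v]
  have hint : ∫ s in (0:ℝ)..1, ⟪gradient f (x + s • v), v⟫ ≤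
      ∫ s in (0:ℝ)..1, (⟪gradient f x, v⟫ + L * ‖v‖ ^ 2 * s) := by
    apply intervalIntegral.integral_mono_on (by norm_num)
      (hcont.intervalIntegrable 0 1)
      ((by continuity : Continuous fun s : ℝ => ⟪gradient f x, v⟫ + L * ‖v‖ ^ 2 * s).intervalIntegrable 0 1)
      hb
  have hrhs : ∫ s in (0:ℝ)..1, (⟪gradient f x, v⟫ + L * ‖v‖ ^ 2 * s) =
      ⟪gradient f x, v⟫ + L / 2 * ‖v‖ ^ 2 := by
    rw [intervalIntegral.integral_add (intervalIntegrable_const)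
      ((by continuity : Continuous fun s : ℝ => L * ‖v‖ ^ 2 * s).intervalIntegrable 0 1)]
    rw [intervalIntegral.integral_const_mul, integral_id, intervalIntegral.integral_const]
    norm_num
    ring
  rw [hkey, hrhs] at hint
  linarith

lemma liminf_aux (g η : ℕ → ℝ) (hg : ∀ t, 0 ≤ g t) (hη : ∀ t, 0 < η t)
    (hdiv : Tendsto (fun T => ∑ t ∈ Finset.range T, η t) atTop atTop)
    (hsum : Summable fun t => η t * g t) :
    liminf g atTop = 0 := by
  rw [liminf_eq]
  have hset : {a : ℝ | ∀ᶠ t in atTop, a ≤ g t} = Set.Iic 0 := by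
    ext a
    simp only [Set.mem_setOf_eq, Set.mem_Iic]
    constructor
    · intro ha
      by_contra hpos
      push_neg at hpos
      obtain ⟨N, hN⟩ := eventually_atTop.mp ha
      have hsum1 : Summable (fun t => η (t + N) * g (t + N)) :=
        (summable_nat_add_iff N).mpr hsum
      have hsum2 : Summable (fun t => η (t + N)) := by
        refine Summable.of_nonneg_of_le (fun t => (hη _).le) (fun t => ?_)
          (hsum1.mul_left (1 / a))
        have hgt : a ≤ g (t + N) := hN _ (Nat.le_add_left N t)
        have hηp := (hη (t + N)).le
        have h1 : η (t + N) * a ≤ η (t + N) * g (t + N) :=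
          mul_le_mul_of_nonneg_left hgt hηp
        calc η (t + N) = 1 / a * (η (t + N) * a) := by field_simp
          _ ≤ 1 / a * (η (t + N) * g (t + N)) := by
              apply mul_le_mul_of_nonneg_left h1
              positivity
      have hsum3 : Summable η := (summable_nat_add_iff N).mp hsum2
      exact not_tendsto_atTop_of_tendsto_nhds hsum3.hasSum.tendsto_sum_nat hdiv
    · intro ha
      exact Filter.Eventually.of_forall fun t => ha.trans (hg t)
  rw [hset, csSup_Iic]


/-- **General WSBD framework, convergence to stationarity.** Under the general
WSBD assumptions (`C` `L`-smooth and bounded below by `C*`; `(θ^t)` adapted; masks `(δ^t)`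
with coordinates in `{0,1}` a.s.; `C(θ^t)`, `‖∇C(θ^t)‖²`, `‖u_t‖²` integrable;
`E[⟨∇C(θ^t), δ^t ⊙ u_t⟩ | ℱ_t] ≥ c ‖∇C(θ^t)‖²` and `E[‖u_t‖² | ℱ_t] ≤ K` a.s.;
`θ^{t+1} = θ^t − η_t (δ^t ⊙ u_t)` a.s.), if the step sizes `η_t > 0` satisfy `Σ η_t = ∞`
and `Σ η_t² < ∞`, then `liminf_{t→∞} E[‖∇C(θ^t)‖²] = 0`. -/
theorem wsbd_general_convergence {Ω : Type*} {m0 : MeasurableSpace Ω}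
    (μ : Measure Ω) [IsProbabilityMeasure μ] {d : ℕ} (hd : 0 < d)
    (C : EuclideanSpace ℝ (Fin d) → ℝ) (L Cstar : ℝ)
    (hdiff : Differentiable ℝ C)
    (hlip : ∀ x y, ‖gradient C x - gradient C y‖ ≤ L * ‖x - y‖)
    (hbdd : ∀ x, Cstar ≤ C x)
    (ℱ : Filtration ℕ m0)
    (θ : ℕ → Ω → EuclideanSpace ℝ (Fin d))
    (hadapt : ∀ t, StronglyMeasurable[ℱ t] (θ t))
    (u : ℕ → Ω → EuclideanSpace ℝ (Fin d))
    (humeas : ∀ t, Measurable (u t))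
    (δ : ℕ → Ω → Fin d → ℝ)
    (hδmeas : ∀ t k, Measurable fun ω => δ t ω k)
    (h01 : ∀ t k, ∀ᵐ ω ∂μ, δ t ω k = 0 ∨ δ t ω k = 1)
    (hCint : ∀ t, Integrable (fun ω => C (θ t ω)) μ)
    (hgint : ∀ t, Integrable (fun ω => ‖gradient C (θ t ω)‖ ^ 2) μ)
    (huint : ∀ t, Integrable (fun ω => ‖u t ω‖ ^ 2) μ)
    (c K : ℝ) (hc : 0 < c) (hK : 0 ≤ K)
    (hdescent : ∀ t, ∀ᵐ ω ∂μ,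
      c * ‖gradient C (θ t ω)‖ ^ 2 ≤
        (μ[fun ω' => ⟪gradient C (θ t ω'),
            (WithLp.equiv 2 (Fin d → ℝ)).symm (fun k => δ t ω' k * u t ω' k)⟫ | ℱ t]) ω)
    (hbound : ∀ t, ∀ᵐ ω ∂μ, (μ[fun ω' => ‖u t ω'‖ ^ 2 | ℱ t]) ω ≤ K)
    (η : ℕ → ℝ) (hη : ∀ t, 0 < η t)
    (hdiv : Tendsto (fun T => ∑ t ∈ Finset.range T, η t) atTop atTop)
    (hsq : Summable fun t => η t ^ 2)
    (hupdate : ∀ t, ∀ᵐ ω ∂μ,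
      θ (t + 1) ω = θ t ω - η t • (WithLp.equiv 2 (Fin d → ℝ)).symm
        (fun k => δ t ω k * u t ω k)) :
    liminf (fun t => ∫ ω, ‖gradient C (θ t ω)‖ ^ 2 ∂μ) atTop = 0 := by
  classical
  set v : ℕ → Ω → EuclideanSpace ℝ (Fin d) :=
    fun t ω => (WithLp.equiv 2 (Fin d → ℝ)).symm (fun k => δ t ω k * u t ω k) with hv
  set G : ℕ → ℝ := fun t => ∫ ω, ‖gradient C (θ t ω)‖ ^ 2 ∂μ with hGdef
  -- L ≥ 0
  have hL0 : 0 ≤ L := by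
    set e : EuclideanSpace ℝ (Fin d) := EuclideanSpace.single ⟨0, hd⟩ (1:ℝ) with he
    have hne : ‖(0:EuclideanSpace ℝ (Fin d)) - e‖ = 1 := by
      simp [he, EuclideanSpace.norm_single]
    have h := hlip 0 e
    rw [hne, mul_one] at h
    exact le_trans (norm_nonneg _) h
  -- measurability
  have hθm : ∀ t, Measurable (θ t) := fun t =>
    (hadapt t).measurable.mono (ℱ.le t) le_rfl
  have hgradm : Measurable (gradient C) := by
    refine (WithLp.measurable_toLp 2 (Fin d → ℝ)).comp
      (f := fun x => (gradient C x).ofLp) (measurable_pi_lambda _ ?_)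
    intro k
    have heq : (fun x : EuclideanSpace ℝ (Fin d) => gradient C x k) =
        fun x => fderiv ℝ C x (EuclideanSpace.single k (1:ℝ)) := by
      funext x
      have h := InnerProductSpace.toDual_symm_apply (𝕜 := ℝ)
        (E := EuclideanSpace ℝ (Fin d)) (y := fderiv ℝ C x) (x := EuclideanSpace.single k (1:ℝ))
      have h2 : ⟪gradient C x, EuclideanSpace.single k (1:ℝ)⟫ = gradient C x k := by
        rw [real_inner_comm, EuclideanSpace.inner_single_left]
        simp
      rw [← h2]
      exact h
    rw [heq]
    exact measurable_fderiv_apply_const ℝ C _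
  have hvm : ∀ t, Measurable (v t) := by
    intro t
    refine (WithLp.measurable_toLp 2 (Fin d → ℝ)).comp
      (f := fun ω => (v t ω).ofLp) (measurable_pi_lambda _ ?_)
    intro k
    have : (fun ω => v t ω k) = fun ω => δ t ω k * u t ω k := by
      funext ω; simp [hv]
    rw [this]
    exact (hδmeas t k).mul ((measurable_pi_apply k).comp ((WithLp.measurable_ofLp 2 _).comp (humeas t)))
  -- pointwise a.e. bound ‖v‖ ≤ ‖u‖
  have hvle : ∀ t, ∀ᵐ ω ∂μ, ‖v t ω‖ ^ 2 ≤ ‖u t ω‖ ^ 2 := by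
    intro t
    have hall : ∀ᵐ ω ∂μ, ∀ k, δ t ω k = 0 ∨ δ t ω k = 1 := ae_all_iff.mpr (h01 t)
    filter_upwards [hall] with ω hω
    have h1 : ‖v t ω‖ ≤ ‖u t ω‖ := by
      rw [EuclideanSpace.norm_eq, EuclideanSpace.norm_eq]
      apply Real.sqrt_le_sqrt
      apply Finset.sum_le_sum
      intro k _
      have hk : v t ω k = δ t ω k * u t ω k := by
        simp [hv]
      rcases hω k with h | h <;> simp [hk, h] <;> positivity
    nlinarith [norm_nonneg (v t ω), norm_nonneg (u t ω)]
  -- integrability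
  have hvint : ∀ t, Integrable (fun ω => ‖v t ω‖ ^ 2) μ := by
    intro t
    refine (huint t).mono' (((hvm t).norm.pow_const 2).aestronglyMeasurable) ?_
    filter_upwards [hvle t] with ω h
    rw [Real.norm_eq_abs, abs_of_nonneg (by positivity)]
    exact h
  have hfm : ∀ t, Measurable (fun ω => ⟪gradient C (θ t ω), v t ω⟫) := fun t =>
    (hgradm.comp (hθm t)).inner (hvm t)
  have hfint : ∀ t, Integrable (fun ω => ⟪gradient C (θ t ω), v t ω⟫) μ := by
    intro t
    refine Integrable.mono' (((hgint t).add (huint t)).const_mul (1/2))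
      ((hfm t).aestronglyMeasurable) ?_
    filter_upwards [hvle t] with ω h
    have h1 := abs_real_inner_le_norm (gradient C (θ t ω)) (v t ω)
    rw [Real.norm_eq_abs]
    simp only [Pi.add_apply]
    nlinarith [norm_nonneg (gradient C (θ t ω)), norm_nonneg (v t ω), norm_nonneg (u t ω),
      sq_nonneg (‖gradient C (θ t ω)‖ - ‖v t ω‖)]
  -- nonnegativity of G and lower bound on expected cost
  have hG0 : ∀ t, 0 ≤ G t := fun t => integral_nonneg fun ω => by positivity
  have hCstar : ∀ t, Cstar ≤ ∫ ω, C (θ t ω) ∂μ := by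
    intro t
    calc Cstar = ∫ _, Cstar ∂μ := by simp
      _ ≤ _ := integral_mono (integrable_const _) (hCint t) fun ω => hbdd _
  -- key one-step estimate
  have key : ∀ t, ∫ ω, C (θ (t+1) ω) ∂μ ≤
      ∫ ω, C (θ t ω) ∂μ - c * η t * G t + L/2 * η t ^ 2 * K := by
    intro t
    have hptw : ∀ᵐ ω ∂μ, C (θ (t+1) ω) ≤
        C (θ t ω) - η t * ⟪gradient C (θ t ω), v t ω⟫ + L/2 * η t ^ 2 * ‖v t ω‖ ^ 2 := by
      filter_upwards [hupdate t] with ω hω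
      have hd := descent_lemma C L hdiff hlip (θ t ω) (θ (t+1) ω)
      have hsub : θ (t+1) ω - θ t ω = -(η t • v t ω) := by rw [hω]; abel
      rw [hsub] at hd
      rw [inner_neg_right, inner_smul_right, norm_neg, norm_smul] at hd
      have : (‖η t‖ * ‖v t ω‖) ^ 2 = η t ^ 2 * ‖v t ω‖ ^ 2 := by
        rw [Real.norm_eq_abs, mul_pow, sq_abs]
      rw [this] at hd
      have : L / 2 * (η t ^ 2 * ‖v t ω‖ ^ 2) = L/2 * η t ^ 2 * ‖v t ω‖ ^ 2 := by ring
      linarith [hd]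
    have hint1 : ∫ ω, C (θ (t+1) ω) ∂μ ≤
        ∫ ω, (C (θ t ω) - η t * ⟪gradient C (θ t ω), v t ω⟫
          + L/2 * η t ^ 2 * ‖v t ω‖ ^ 2) ∂μ :=
      integral_mono_ae (hCint (t+1))
        (((hCint t).sub ((hfint t).const_mul (η t))).add ((hvint t).const_mul (L/2 * η t ^ 2)))
        hptw
    have h1c : Integrable (fun ω => η t * ⟪gradient C (θ t ω), v t ω⟫) μ :=
      (hfint t).const_mul (η t)
    have h1a : Integrable (fun ω => C (θ t ω) - η t * ⟪gradient C (θ t ω), v t ω⟫) μ :=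
      (hCint t).sub h1c
    have h1b : Integrable (fun ω => L/2 * η t ^ 2 * ‖v t ω‖ ^ 2) μ :=
      (hvint t).const_mul _
    rw [integral_add h1a h1b, integral_sub (hCint t) h1c,
      integral_const_mul, integral_const_mul] at hint1
    have h2 : c * G t ≤ ∫ ω, ⟪gradient C (θ t ω), v t ω⟫ ∂μ := by
      rw [← integral_condExp (ℱ.le t)
        (f := fun ω' => ⟪gradient C (θ t ω'), v t ω'⟫)]
      calc c * G t = ∫ ω, c * ‖gradient C (θ t ω)‖ ^ 2 ∂μ := (integral_const_mul _ _).symm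
        _ ≤ _ := integral_mono_ae ((hgint t).const_mul c) integrable_condExp (hdescent t)
    have h3 : ∫ ω, ‖v t ω‖ ^ 2 ∂μ ≤ K := by
      have ha : ∫ ω, ‖v t ω‖ ^ 2 ∂μ ≤ ∫ ω, ‖u t ω‖ ^ 2 ∂μ :=
        integral_mono_ae (hvint t) (huint t) (hvle t)
      have hb : ∫ ω, ‖u t ω‖ ^ 2 ∂μ ≤ K := by
        rw [← integral_condExp (ℱ.le t) (f := fun ω' => ‖u t ω'‖ ^ 2)]
        calc ∫ ω, (μ[fun ω' => ‖u t ω'‖ ^ 2 | ℱ t]) ω ∂μ ≤ ∫ _, K ∂μ :=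
              integral_mono_ae integrable_condExp (integrable_const _) (hbound t)
          _ = K := by simp
      linarith
    have h4 : η t * (c * G t) ≤ η t * ∫ ω, ⟪gradient C (θ t ω), v t ω⟫ ∂μ :=
      mul_le_mul_of_nonneg_left h2 (hη t).le
    have h5 : L/2 * η t ^ 2 * ∫ ω, ‖v t ω‖ ^ 2 ∂μ ≤ L/2 * η t ^ 2 * K :=
      mul_le_mul_of_nonneg_left h3 (by positivity)
    nlinarith [hint1]
  -- telescoping
  have htel : ∀ T, ∫ ω, C (θ T ω) ∂μ + c * ∑ t ∈ Finset.range T, η t * G t ≤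
      (∫ ω, C (θ 0 ω) ∂μ) + L/2 * K * ∑ t ∈ Finset.range T, η t ^ 2 := by
    intro T
    induction T with
    | zero => simp
    | succ T ih =>
      rw [Finset.sum_range_succ, Finset.sum_range_succ]
      have := key T
      nlinarith
  have hsqb : ∀ T, ∑ t ∈ Finset.range T, η t ^ 2 ≤ ∑' t, η t ^ 2 := fun T =>
    hsq.sum_le_tsum _ (fun i _ => sq_nonneg _)
  have hsummable : Summable (fun t => η t * G t) := by
    refine summable_of_sum_range_le (c := ((∫ ω, C (θ 0 ω) ∂μ) - Cstar + L/2 * K * ∑' t, η t ^ 2)/c)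
      (fun t => mul_nonneg (hη t).le (hG0 t)) (fun T => ?_)
    rw [le_div_iff₀ hc]
    have h1 := htel T
    have h2 := hsqb T
    have h3 := hCstar T
    have h4 : L/2 * K * ∑ t ∈ Finset.range T, η t ^ 2 ≤ L/2 * K * ∑' t, η t ^ 2 :=
      mul_le_mul_of_nonneg_left h2 (by positivity)
    nlinarith
  exact liminf_aux G η hG0 hη hdiv hsummable
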